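/- arXiv:2506.01886 — 3 statements merged into one kernel-verified Lean document; each statement's English description precedes it below -/
import Mathlib

section
/- Jacobi triple product identity: for nonzero complex x and q with 0 < |q| < 1, (x;q)_∞ (q/x;q)_∞ (q;q)_∞ = ∑_{n∈ℤ} (-1)^n q^{n(n-1)/2} x^n. -/
open Complex

/-- Infinite q-Pochhammer symbol `(x;q)_∞ = ∏_{i≥0} (1 - q^i x)`. -/
noncomputable def qPoch (x q : ℂ) : ℂ := ∏' i : ℕ, (1 - q ^ i * x)

/-- Theta function `j(x;q) = (x;q)_∞ (q/x;q)_∞ (q;q)_∞`. -/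
noncomputable def jtheta (x q : ℂ) : ℂ := qPoch x q * qPoch (q / x) q * qPoch q q

open Finset Filter Topology

set_option linter.unusedSectionVars false

namespace JTP



lemma hasProd_zero_of_exists_zero {f : ℕ → ℂ} (h : ∃ i, f i = 0) : HasProd f 0 := by
  obtain ⟨i₀, hi₀⟩ := h
  rw [HasProd]
  apply Tendsto.congr' _ tendsto_const_nhds
  filter_upwards [eventually_ge_atTop ({i₀} : Finset ℕ)] with s hs
  exact (Finset.prod_eq_zero (hs (Finset.mem_singleton_self i₀)) hi₀).symm

lemma multipliable_one_add {f : ℕ → ℂ} (hf : Summable f) :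
    Multipliable (fun i => 1 + f i) := by
  by_cases h : ∃ i, 1 + f i = 0
  · exact ⟨0, hasProd_zero_of_exists_zero h⟩
  · push_neg at h
    have hlog : Summable (fun n => Complex.log (1 + f n)) := by
      have h2 : ∀ᶠ n in atTop, ‖Complex.log (1 + f n)‖ ≤ (3/2) * ‖f n‖ := by
        filter_upwards [hf.tendsto_atTop_zero.eventually
          (Metric.ball_mem_nhds (0:ℂ) (by norm_num : (0:ℝ) < 1/2))] with n hn
        apply Complex.norm_log_one_add_half_le_self
        simpa [dist_eq_norm] using hn.le
      have h3 : Summable (fun n => (3/2) * ‖f n‖) := hf.norm.mul_left _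
      exact h3.of_norm_bounded_eventually_nat h2
    exact Complex.multipliable_one_add_of_summable hf




/-- exponent function n(n-1)/2 -/
def Ee (n : ℤ) : ℤ := n * (n - 1) / 2

lemma twoE (n : ℤ) : 2 * Ee n = n * (n - 1) := by
  have h : Even (n * (n - 1)) := by
    have := Int.even_mul_succ_self (n - 1)
    simpa [mul_comm] using this
  exact Int.two_mul_ediv_two_of_even h

lemma Ee_add_one (n : ℤ) : Ee (n + 1) = Ee n + n := by
  have h1 := twoE n
  have h2 := twoE (n + 1)
  have h3 : (n + 1) * (n + 1 - 1) = n * (n - 1) + 2 * n := by ring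
  omega

noncomputable def Ff (q : ℂ) (m : ℕ) : ℂ := ∏ i ∈ range m, (1 - q ^ (i + 1))

lemma Ff_zero (q : ℂ) : Ff q 0 = 1 := by simp [Ff]

lemma Ff_succ (q : ℂ) (m : ℕ) : Ff q (m + 1) = Ff q m * (1 - q ^ (m + 1)) :=
  Finset.prod_range_succ _ _

noncomputable def Bc (q : ℂ) (m k : ℕ) : ℂ := Ff q m / (Ff q k * Ff q (m - k))

noncomputable def cc (q : ℂ) (m k : ℕ) : ℂ :=
  if k ≤ m then q ^ (Ee k) * Bc q m k else 0

section

variable {q : ℂ} (hq0 : q ≠ 0) (hne : ∀ i : ℕ, 1 - q ^ (i + 1) ≠ 0)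

include hne

lemma Ff_ne (m : ℕ) : Ff q m ≠ 0 :=
  Finset.prod_ne_zero_iff.mpr fun i _ => hne i

lemma Bc_self (m : ℕ) : Bc q m m = 1 := by
  simp [Bc, Ff_zero, div_self (Ff_ne hne m)]

lemma Bc_zero (m : ℕ) : Bc q m 0 = 1 := by
  simp [Bc, Ff_zero, div_self (Ff_ne hne m)]

lemma Bc_pascal (k j : ℕ) :
    Bc q (k + j + 2) (k + 1) = Bc q (k + j + 1) (k + 1) + q ^ (j + 1) * Bc q (k + j + 1) k := by
  have e1 : k + j + 2 - (k + 1) = j + 1 := by omega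
  have e2 : k + j + 1 - (k + 1) = j := by omega
  have e3 : k + j + 1 - k = j + 1 := by omega
  rw [Bc, Bc, Bc, e1, e2, e3, show k + j + 2 = (k + j + 1) + 1 from rfl,
    Ff_succ, Ff_succ q k, Ff_succ q j]
  have h1 := Ff_ne hne k
  have h2 := Ff_ne hne j
  have h3 := Ff_ne hne (k + j + 1)
  have h4 := hne k
  have h5 := hne j
  field_simp
  ring_nf

end



section
variable {q : ℂ} (hq0 : q ≠ 0) (hne : ∀ i : ℕ, 1 - q ^ (i + 1) ≠ 0)
include hne

lemma cc_zero (m : ℕ) : cc q m 0 = 1 := by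
  simp [cc, Ee, Bc_zero hne]

include hq0 in
lemma cc_pascal (m k : ℕ) (hk : k ≤ m) :
    cc q (m + 1) (k + 1) = cc q m (k + 1) + q ^ m * cc q m k := by
  rcases eq_or_lt_of_le hk with rfl | hlt
  · rw [cc, cc, cc, if_pos le_rfl, if_pos le_rfl, if_neg (by omega),
      Bc_self hne, Bc_self hne]
    rw [show ((k+1:ℕ):ℤ) = (k:ℤ)+1 by push_cast; ring, Ee_add_one]
    rw [zpow_add₀ hq0, zpow_natCast]
    ring
  · obtain ⟨j, rfl⟩ : ∃ j, m = k + (j + 1) := ⟨m - k - 1, by omega⟩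
    have key : (q ^ (Ee ((k:ℤ)+1))) * q ^ (j+1) = q ^ (k+j+1) * q ^ (Ee (k:ℤ)) := by
      rw [Ee_add_one, ← zpow_natCast q (j+1), ← zpow_natCast q (k+j+1),
        ← zpow_add₀ hq0, ← zpow_add₀ hq0]
      congr 1; push_cast; ring
    rw [show k + (j+1) + 1 = k + j + 2 by omega, show k + (j+1) = k + j + 1 by omega]
    rw [cc, cc, cc, if_pos (by omega), if_pos (by omega), if_pos (by omega),
      Bc_pascal hne, show ((k+1:ℕ):ℤ) = (k:ℤ)+1 by push_cast; ring]
    linear_combination (Bc q (k+j+1) k) * key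

include hq0 in
lemma qbinom (m : ℕ) (t : ℂ) :
    ∏ j ∈ range m, (1 + t * q ^ j) = ∑ k ∈ range (m + 1), cc q m k * t ^ k := by
  induction m with
  | zero => simp [cc_zero hne]
  | succ m ih =>
    rw [Finset.prod_range_succ, ih]
    have expand : ∑ k ∈ range (m+2), cc q (m+1) k * t ^ k
        = (∑ k ∈ range (m+1), (cc q m (k+1) * t^(k+1) + q^m * cc q m k * t^(k+1))) + 1 := by
      rw [Finset.sum_range_succ' (fun k => cc q (m+1) k * t ^ k) (m+1)]
      congr 1
      · exact Finset.sum_congr rfl (fun k hk => by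
          rw [cc_pascal hq0 hne m k (Nat.lt_succ_iff.mp (Finset.mem_range.mp hk))]; ring)
      · simp [cc_zero hne]
    rw [show m + 1 + 1 = m + 2 from rfl, expand, Finset.sum_add_distrib]
    have h1 : ∑ k ∈ range (m+1), cc q m (k+1) * t^(k+1)
        = (∑ k ∈ range (m+1), cc q m k * t^k) - 1 := by
      rw [Finset.sum_range_succ, show cc q m (m+1) = 0 from by simp [cc],
        Finset.sum_range_succ' (fun k => cc q m k * t^k) m]
      simp [cc_zero hne]
    have h2 : ∑ k ∈ range (m+1), q^m * cc q m k * t^(k+1)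
        = (t * q^m) * ∑ k ∈ range (m+1), cc q m k * t^k := by
      rw [Finset.mul_sum]; exact Finset.sum_congr rfl fun k _ => by ring
    rw [h1, h2]; ring

end




lemma prod_zpow {b : ℂ} (hb : b ≠ 0) (N : ℕ) (f : ℕ → ℤ) :
    ∏ j ∈ range N, b ^ f j = b ^ (∑ j ∈ range N, f j) := by
  induction N with
  | zero => simp
  | succ n ih => rw [prod_range_succ, sum_range_succ, ih, zpow_add₀ hb]

section
variable {q x : ℂ} (hq0 : q ≠ 0) (hx : x ≠ 0)

include hq0 hx in
lemma lhs_eq (N : ℕ) :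
    ∏ j ∈ range (2*N), (1 + (-(x * q ^ (-(N:ℤ)))) * q ^ j)
      = (((-x)^N * q ^ (∑ j ∈ range N, ((j:ℤ) - N))) *
          ∏ i ∈ range N, (1 - q ^ (i+1) / x)) * ∏ i ∈ range N, (1 - q ^ i * x) := by
  have hfac : ∀ j : ℕ, 1 + (-(x * q ^ (-(N:ℤ)))) * q ^ j = 1 - x * q ^ ((j:ℤ) - N) := by
    intro j
    have : (x * q ^ (-(N:ℤ))) * q ^ j = x * q ^ ((j:ℤ) - N) := by
      rw [← zpow_natCast q j, mul_assoc, ← zpow_add₀ hq0]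
      congr 2
      ring
    rw [neg_mul, this]
    ring
  rw [two_mul, Finset.prod_range_add]
  have hsecond : ∀ j ∈ range N, 1 + (-(x * q ^ (-(N:ℤ)))) * q ^ (N + j) = 1 - q ^ j * x := by
    intro j _
    rw [hfac (N + j)]
    have : ((N + j : ℕ) : ℤ) - N = (j : ℕ) := by push_cast; ring
    rw [this, zpow_natCast]
    ring
  have hfirst : ∏ j ∈ range N, (1 + (-(x * q ^ (-(N:ℤ)))) * q ^ j)
      = ((-x)^N * q ^ (∑ j ∈ range N, ((j:ℤ) - N))) * ∏ i ∈ range N, (1 - q ^ (i+1) / x) := by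
    have step1 : ∀ j ∈ range N, 1 + (-(x * q ^ (-(N:ℤ)))) * q ^ j
        = (-x) * q ^ ((j:ℤ) - N) * (1 - q ^ ((N:ℤ) - j) / x) := by
      intro j _
      rw [hfac j]
      have h1 : q ^ ((j:ℤ) - N) * q ^ ((N:ℤ) - j) = 1 := by
        rw [← zpow_add₀ hq0]; norm_num
      calc 1 - x * q ^ ((j:ℤ) - N)
          = -(x * q ^ ((j:ℤ)-N)) + (q ^ ((j:ℤ)-N) * q ^ ((N:ℤ)-j)) * (x / x) := by
            rw [h1, div_self hx]; ring
        _ = (-x) * q ^ ((j:ℤ) - N) * (1 - q ^ ((N:ℤ) - j) / x) := by ring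
    rw [Finset.prod_congr rfl step1]
    rw [Finset.prod_mul_distrib, Finset.prod_mul_distrib, Finset.prod_const, card_range,
      prod_zpow hq0]
    congr 1
    have refl1 : ∀ j ∈ range N, 1 - q ^ ((N:ℤ) - j) / x
        = (fun i => 1 - q ^ (i+1) / x) (N - 1 - j) := by
      intro j hj
      have hj' := mem_range.mp hj
      simp only []
      congr 2
      rw [← zpow_natCast q (N - 1 - j + 1)]
      congr 1
      omega
    rw [Finset.prod_congr rfl refl1]
    exact Finset.prod_range_reflect (fun i => 1 - q ^ (i+1) / x) N
  rw [Finset.prod_congr rfl hsecond, hfirst]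

end



section
variable {q x : ℂ} (hq0 : q ≠ 0) (hne : ∀ i : ℕ, 1 - q ^ (i + 1) ≠ 0) (hx : x ≠ 0)

include hq0 hne hx in
lemma finite_id (N : ℕ) :
    (∏ i ∈ range N, (1 - q ^ i * x)) * (∏ i ∈ range N, (1 - q ^ (i+1) / x))
      = ∑ k ∈ range (2*N+1), Bc q (2*N) k *
          ((-1:ℂ) ^ ((k:ℤ) - N) * q ^ (Ee ((k:ℤ) - N)) * x ^ ((k:ℤ) - N)) := by
  set SN : ℤ := ∑ j ∈ range N, ((j:ℤ) - N) with hSNdef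
  have hSN : 2 * SN = -(N:ℤ)*N - N := by
    have hgauss : ∀ M : ℕ, 2 * (∑ j ∈ range M, (j:ℤ)) = (M:ℤ) * (M - 1) := by
      intro M
      induction M with
      | zero => simp
      | succ m ih => rw [sum_range_succ]; push_cast; push_cast at ih; linarith
    have : SN = (∑ j ∈ range N, (j:ℤ)) - N * N := by
      rw [hSNdef, Finset.sum_sub_distrib]
      simp [Finset.sum_const, card_range, mul_comm]
    rw [this]
    have := hgauss N
    linarith
  set t : ℂ := -(x * q ^ (-(N:ℤ))) with htdef
  have hm1 : (-1 : ℂ) ≠ 0 := by norm_num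
  have ht : ∀ k : ℕ, t ^ k = (-1:ℂ)^(k:ℤ) * x^(k:ℤ) * q^(-(N:ℤ)*(k:ℤ)) := by
    intro k
    rw [htdef, show -(x * q ^ (-(N:ℤ))) = (-1) * x * q ^ (-(N:ℤ)) by ring, mul_pow, mul_pow,
      ← zpow_natCast (-1 : ℂ) k, ← zpow_natCast x k, ← zpow_natCast (q ^ (-(N:ℤ))) k,
      ← zpow_mul]
  have hC : ((-x)^N * q ^ SN) ≠ 0 := by
    apply mul_ne_zero (pow_ne_zero _ (neg_ne_zero.mpr hx)) (zpow_ne_zero _ hq0)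
  apply mul_left_cancel₀ hC
  have hqb := qbinom hq0 hne (2*N) t
  have hterm : ∀ k ∈ range (2*N+1), cc q (2*N) k * t ^ k
      = ((-x)^N * q ^ SN) * (Bc q (2*N) k *
          ((-1:ℂ) ^ ((k:ℤ) - N) * q ^ (Ee ((k:ℤ) - N)) * x ^ ((k:ℤ) - N))) := by
    intro k hk
    have hk' : k ≤ 2*N := Nat.lt_succ_iff.mp (mem_range.mp hk)
    have eexp : SN + Ee ((k:ℤ)-N) = Ee (k:ℤ) + (-(N:ℤ))*(k:ℤ) := by
      have h1 := twoE ((k:ℤ)-N)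
      have h2 := twoE (k:ℤ)
      have h4 : ((k:ℤ)-N)*((k:ℤ)-N-1) = (k:ℤ)*((k:ℤ)-1) - 2*N*k + N*N + N := by ring
      linarith
    have key : q ^ (Ee (k:ℤ)) * ((-1:ℂ)^(k:ℤ) * x^(k:ℤ) * q^(-(N:ℤ)*(k:ℤ)))
        = ((-1:ℂ)^(N:ℤ) * x^(N:ℤ) * q^SN) *
            ((-1:ℂ) ^ ((k:ℤ) - N) * q ^ (Ee ((k:ℤ) - N)) * x ^ ((k:ℤ) - N)) := by
      calc q ^ (Ee (k:ℤ)) * ((-1:ℂ)^(k:ℤ) * x^(k:ℤ) * q^(-(N:ℤ)*(k:ℤ)))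
          = (-1:ℂ)^(k:ℤ) * x^(k:ℤ) * (q^(Ee (k:ℤ)) * q^(-(N:ℤ)*(k:ℤ))) := by ring
        _ = (-1:ℂ)^((N:ℤ) + ((k:ℤ)-N)) * x^((N:ℤ) + ((k:ℤ)-N)) * q^(SN + Ee ((k:ℤ)-N)) := by
            rw [show (N:ℤ) + ((k:ℤ)-N) = (k:ℤ) by ring, eexp, zpow_add₀ hq0]
        _ = ((-1:ℂ)^(N:ℤ) * x^(N:ℤ) * q^SN) *
              ((-1:ℂ) ^ ((k:ℤ) - N) * q ^ (Ee ((k:ℤ) - N)) * x ^ ((k:ℤ) - N)) := by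
            rw [zpow_add₀ hm1, zpow_add₀ hx, zpow_add₀ hq0]; ring
    rw [cc, if_pos hk', ht k,
      show ((-x):ℂ)^N = (-1:ℂ)^(N:ℤ) * x^(N:ℤ) by
        rw [zpow_natCast, zpow_natCast, ← neg_one_mul, mul_pow]]
    linear_combination (Bc q (2*N) k) * key
  calc ((-x)^N * q ^ SN) * ((∏ i ∈ range N, (1 - q ^ i * x)) * ∏ i ∈ range N, (1 - q ^ (i+1) / x))
      = (((-x)^N * q ^ SN) * ∏ i ∈ range N, (1 - q ^ (i+1) / x)) * ∏ i ∈ range N, (1 - q ^ i * x) := by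
        ring
    _ = ∏ j ∈ range (2*N), (1 + t * q ^ j) := (lhs_eq hq0 hx N).symm
    _ = ∑ k ∈ range (2*N+1), cc q (2*N) k * t ^ k := hqb
    _ = ∑ k ∈ range (2*N+1), ((-x)^N * q ^ SN) * (Bc q (2*N) k *
          ((-1:ℂ) ^ ((k:ℤ) - N) * q ^ (Ee ((k:ℤ) - N)) * x ^ ((k:ℤ) - N))) :=
        Finset.sum_congr rfl hterm
    _ = ((-x)^N * q ^ SN) * ∑ k ∈ range (2*N+1), Bc q (2*N) k *
          ((-1:ℂ) ^ ((k:ℤ) - N) * q ^ (Ee ((k:ℤ) - N)) * x ^ ((k:ℤ) - N)) := by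
        rw [Finset.mul_sum]

end



lemma tendsto_prod_one_sub {g : ℕ → ℂ} (hg : Summable g) :
    Tendsto (fun m => ∏ i ∈ range m, (1 - g i)) atTop (𝓝 (∏' i, (1 - g i))) := by
  have h := Multipliable.tendsto_prod_tprod_nat (multipliable_one_add hg.neg)
  simpa [sub_eq_add_neg] using h

lemma prod_one_sub_ge (s : Finset ℕ) (a : ℕ → ℝ) (h0 : ∀ i, 0 ≤ a i) (h1 : ∀ i, a i ≤ 1) :
    1 - ∑ i ∈ s, a i ≤ ∏ i ∈ s, (1 - a i) := by
  induction s using Finset.cons_induction with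
  | empty => simp
  | cons j s hj ih =>
    rw [Finset.prod_cons, Finset.sum_cons]
    have hs0 : 0 ≤ ∑ i ∈ s, a i := Finset.sum_nonneg fun i _ => h0 i
    have h2 : (1 - a j) * (1 - ∑ i ∈ s, a i) ≤ (1 - a j) * ∏ i ∈ s, (1 - a i) := by
      apply mul_le_mul_of_nonneg_left ih (by linarith [h1 j])
    nlinarith [h0 j]

section
variable {q : ℂ} (hq0 : q ≠ 0) (hq : ‖q‖ < 1)

include hq in
lemma Ff_upper : ∀ m, ‖Ff q m‖ ≤ Real.exp (∑' i : ℕ, ‖q‖ ^ (i+1)) := by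
  intro m
  set r := ‖q‖ with hr
  have hr0 : 0 ≤ r := norm_nonneg q
  have hsum : Summable (fun i : ℕ => r ^ (i+1)) := by
    simpa [pow_succ, mul_comm] using (summable_geometric_of_lt_one hr0 hq).mul_left r
  have h1 : ‖Ff q m‖ ≤ ∏ i ∈ range m, (1 + r ^ (i+1)) := by
    rw [Ff, norm_prod]
    apply Finset.prod_le_prod (fun i _ => norm_nonneg _)
    intro i _
    calc ‖1 - q ^ (i+1)‖ ≤ ‖(1:ℂ)‖ + ‖q ^ (i+1)‖ := by
          exact norm_sub_le _ _
      _ = 1 + r ^ (i+1) := by simp [norm_pow, hr]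
  refine h1.trans ?_
  calc ∏ i ∈ range m, (1 + r ^ (i+1)) ≤ ∏ i ∈ range m, Real.exp (r ^ (i+1)) := by
        apply Finset.prod_le_prod (fun i _ => by positivity)
        intro i _
        linarith [Real.add_one_le_exp (r ^ (i+1))]
    _ = Real.exp (∑ i ∈ range m, r ^ (i+1)) := by rw [Real.exp_sum]
    _ ≤ Real.exp (∑' i : ℕ, r ^ (i+1)) := by
        apply Real.exp_le_exp.mpr
        exact Summable.sum_le_tsum _ (fun i _ => by positivity) hsum

include hq0 hq in
lemma Ff_lower : ∃ c : ℝ, 0 < c ∧ ∀ m, c ≤ ‖Ff q m‖ := by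
  set r := ‖q‖ with hr
  have hr0 : 0 < r := norm_pos_iff.mpr hq0
  have hr1 : ∀ i : ℕ, r ^ (i+1) < 1 := fun i => pow_lt_one₀ hr0.le hq (by omega)
  have hsum : Summable (fun i : ℕ => r ^ (i+1)) := by
    simpa [pow_succ, mul_comm] using (summable_geometric_of_lt_one hr0.le hq).mul_left r
  -- choose M with tail sum ≤ 1/2
  obtain ⟨M, hM⟩ : ∃ M : ℕ, ∑' i : ℕ, r ^ (M + i + 1) ≤ 1 / 2 := by
    have htail : Tendsto (fun M : ℕ => r ^ M * ∑' i : ℕ, r ^ (i+1)) atTop (𝓝 0) := by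
      simpa using (tendsto_pow_atTop_nhds_zero_of_lt_one hr0.le hq).mul_const
        (∑' i : ℕ, r ^ (i+1))
    obtain ⟨M, hM⟩ := (htail.eventually (eventually_le_nhds (by norm_num : (0:ℝ) < 1/2))).exists
    refine ⟨M, le_trans (le_of_eq ?_) hM⟩
    rw [← tsum_mul_left]
    exact tsum_congr fun i => by ring
  have hprodpos : ∀ s : Finset ℕ, 0 < ∏ i ∈ s, (1 - r ^ (i+1)) :=
    fun s => Finset.prod_pos fun i _ => by linarith [hr1 i]
  refine ⟨(∏ i ∈ range M, (1 - r ^ (i+1))) * (1/2),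
    mul_pos (hprodpos _) (by norm_num), ?_⟩
  intro m
  have habs : ∏ i ∈ range m, (1 - r ^ (i+1)) ≤ ‖Ff q m‖ := by
    rw [Ff, norm_prod]
    apply Finset.prod_le_prod (fun i _ => by linarith [hr1 i])
    intro i _
    calc 1 - r ^ (i+1) = ‖(1:ℂ)‖ - ‖q ^ (i+1)‖ := by
          simp [norm_pow, hr]
      _ ≤ ‖(1:ℂ) - q ^ (i+1)‖ := norm_sub_norm_le _ _
      _ = ‖1 - q ^ (i+1)‖ := rfl
  refine le_trans ?_ habs
  rcases le_or_gt m M with hmM | hmM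
  · -- m ≤ M : prod over range m ≥ prod over range M ≥ c
    obtain ⟨l, rfl⟩ : ∃ l, M = m + l := ⟨M - m, by omega⟩
    have : ∏ i ∈ range (m + l), (1 - r ^ (i+1)) ≤ ∏ i ∈ range m, (1 - r ^ (i+1)) := by
      rw [Finset.prod_range_add]
      have h2 : ∏ i ∈ range l, (1 - r ^ (m + i + 1)) ≤ 1 := by
        apply Finset.prod_le_one (fun i _ => by linarith [hr1 (m + i)])
        intro i _
        have := pow_pos hr0 (m + i + 1)
        linarith
      nlinarith [hprodpos (range m), hprodpos (range l)]
    nlinarith [hprodpos (range (m + l))]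
  · obtain ⟨l, rfl⟩ : ∃ l, m = M + l := ⟨m - M, by omega⟩
    rw [Finset.prod_range_add]
    have htail2 : (1:ℝ)/2 ≤ ∏ i ∈ range l, (1 - r ^ (M + i + 1)) := by
      have h3 : ∑ i ∈ range l, r ^ (M + i + 1) ≤ 1/2 := by
        refine le_trans (Summable.sum_le_tsum (range l) (fun i _ => by positivity) ?_) hM
        exact ((summable_geometric_of_lt_one hr0.le hq).mul_left (r ^ (M+1))).congr
          (fun i => by rw [← pow_add]; congr 1; omega)
      calc (1:ℝ)/2 ≤ 1 - ∑ i ∈ range l, r ^ (M + i + 1) := by linarith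
        _ ≤ ∏ i ∈ range l, (1 - r ^ (M + i + 1)) := by
            apply prod_one_sub_ge
            · intro i; positivity
            · intro i; exact (hr1 (M + i)).le
    have := hprodpos (range M)
    nlinarith [hprodpos (range l)]
end



noncomputable def aa (q x : ℂ) (N : ℕ) (n : ℤ) : ℂ :=
  if n.natAbs ≤ N then
    Bc q (2*N) (n + N).toNat * ((-1:ℂ) ^ n * q ^ (Ee n) * x ^ n)
  else 0

lemma tsum_aa (q x : ℂ) (N : ℕ) :
    ∑' n : ℤ, aa q x N n
      = ∑ k ∈ range (2*N+1), Bc q (2*N) k *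
          ((-1:ℂ) ^ ((k:ℤ) - N) * q ^ (Ee ((k:ℤ) - N)) * x ^ ((k:ℤ) - N)) := by
  rw [tsum_eq_sum (s := Finset.Icc (-(N:ℤ)) N)
    (fun n hn => by
      rw [aa, if_neg]
      simp only [Finset.mem_Icc] at hn
      omega)]
  refine Finset.sum_nbij' (fun n : ℤ => (n + N).toNat) (fun k : ℕ => (k:ℤ) - N) ?_ ?_ ?_ ?_ ?_
  · intro n hn
    simp only [Finset.mem_Icc] at hn
    simp only [Finset.mem_range]
    omega
  · intro k hk
    simp only [Finset.mem_range] at hk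
    simp only [Finset.mem_Icc]
    omega
  · intro n hn
    simp only [Finset.mem_Icc] at hn
    omega
  · intro k hk
    simp only [Finset.mem_range] at hk
    omega
  · intro n hn
    simp only [Finset.mem_Icc] at hn
    rw [aa, if_pos (by omega)]
    have h1 : ((((n + N).toNat : ℕ)) : ℤ) - N = n := by omega
    rw [h1]

section
variable {q x : ℂ} (hq0 : q ≠ 0) (hq : ‖q‖ < 1) (hx : x ≠ 0)

include hq0 hq in
lemma aa_bound : ∃ K : ℝ, ∀ (N : ℕ) (n : ℤ),
    ‖aa q x N n‖ ≤ K * (‖q‖ ^ (Ee n) * ‖x‖ ^ n) := by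
  obtain ⟨c, hc0, hc⟩ := Ff_lower hq0 hq
  set C := Real.exp (∑' i : ℕ, ‖q‖ ^ (i+1)) with hC
  have hCpos : 0 < C := Real.exp_pos _
  refine ⟨C / (c * c), ?_⟩
  intro N n
  rw [aa]
  split_ifs with h
  · rw [norm_mul, norm_mul, norm_mul]
    have habs1 : ‖(-1:ℂ) ^ n‖ = 1 := by
      rw [norm_zpow]
      simp
    rw [habs1, one_mul, norm_zpow, norm_zpow]
    have hBc : ‖Bc q (2*N) (n + N).toNat‖ ≤ C / (c * c) := by
      rw [Bc, norm_div, norm_mul]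
      apply div_le_div₀ hCpos.le (Ff_upper hq _) (by positivity)
      calc c * c ≤ ‖Ff q (n + N).toNat‖ *
            ‖Ff q (2*N - (n + N).toNat)‖ := by
            apply mul_le_mul (hc _) (hc _) hc0.le (norm_nonneg _)
        _ = _ := rfl
    apply mul_le_mul_of_nonneg_right hBc (by positivity)
  · simp only [norm_zero]
    positivity

lemma summable_dom {r R : ℝ} (hr0 : 0 < r) (hr : r < 1) (hR : 0 < R) :
    Summable (fun n : ℤ => r ^ (Ee n) * R ^ n) := by
  have hpos : ∀ n : ℤ, 0 < r ^ (Ee n) * R ^ n :=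
    fun n => mul_pos (zpow_pos hr0 _) (zpow_pos hR _)
  apply Summable.of_nat_of_neg
  · apply summable_of_ratio_norm_eventually_le (r := 1/2) (by norm_num)
    have hev : ∀ᶠ m : ℕ in atTop, r ^ m * R ≤ 1/2 := by
      have : Tendsto (fun m : ℕ => r ^ m * R) atTop (𝓝 0) := by
        simpa using (tendsto_pow_atTop_nhds_zero_of_lt_one hr0.le hr).mul_const R
      exact this.eventually (eventually_le_nhds (by norm_num))
    filter_upwards [hev] with m hm
    have hEe : Ee ((m:ℤ) + 1) = Ee (m:ℤ) + m := Ee_add_one _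
    have hkey : r ^ (Ee ((m:ℤ)+1)) * R ^ ((m:ℤ)+1)
        = (r ^ (Ee (m:ℤ)) * R ^ (m:ℤ)) * (r ^ m * R) := by
      rw [hEe, zpow_add₀ hr0.ne', zpow_add₀ hR.ne', zpow_natCast, zpow_one]
      ring
    rw [Real.norm_eq_abs, Real.norm_eq_abs, abs_of_pos (hpos _), abs_of_pos (hpos _)]
    push_cast
    rw [hkey]
    have h1 : 0 < r ^ (Ee (m:ℤ)) * R ^ (m:ℤ) := hpos _
    nlinarith [mul_pos (zpow_pos hr0 (Ee (m:ℤ))) (zpow_pos hR (m:ℤ)),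
      mul_nonneg (pow_nonneg hr0.le m) hR.le]
  · apply summable_of_ratio_norm_eventually_le (r := 1/2) (by norm_num)
    have hev : ∀ᶠ m : ℕ in atTop, r ^ (m+1) * R⁻¹ ≤ 1/2 := by
      have : Tendsto (fun m : ℕ => r ^ (m+1) * R⁻¹) atTop (𝓝 0) := by
        have h0 : Tendsto (fun m : ℕ => r ^ m) atTop (𝓝 0) :=
          tendsto_pow_atTop_nhds_zero_of_lt_one hr0.le hr
        simpa using ((h0.comp (tendsto_add_atTop_nat 1)).mul_const R⁻¹)
      exact this.eventually (eventually_le_nhds (by norm_num))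
    filter_upwards [hev] with m hm
    have hEe : Ee (-((m:ℤ)+1)) = Ee (-(m:ℤ)) + (m+1) := by
      have h1 := twoE (-((m:ℤ)+1))
      have h2 := twoE (-(m:ℤ))
      have h3 : (-((m:ℤ)+1)) * (-((m:ℤ)+1) - 1) = (-(m:ℤ)) * (-(m:ℤ) - 1) + 2*(m+1) := by ring
      linarith
    have hkey : r ^ (Ee (-((m:ℤ)+1))) * R ^ (-((m:ℤ)+1))
        = (r ^ (Ee (-(m:ℤ))) * R ^ (-(m:ℤ))) * (r ^ (m+1) * R⁻¹) := by
      have c1 : ((m:ℤ)+1) = ((m+1 : ℕ) : ℤ) := by push_cast; ring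
      have c2 : (-((m:ℤ)+1)) = -((m+1 : ℕ) : ℤ) := by push_cast; ring
      have e1 : r ^ ((m:ℤ)+1) = r ^ (m+1 : ℕ) := by rw [c1, zpow_natCast]
      have e2 : R ^ (-((m:ℤ)+1)) = (R ^ (m+1 : ℕ))⁻¹ := by rw [c2, zpow_neg, zpow_natCast]
      have e3 : R ^ (-(m:ℤ)) = (R ^ (m : ℕ))⁻¹ := by rw [zpow_neg, zpow_natCast]
      rw [hEe, zpow_add₀ hr0.ne', e1, e2, e3, pow_succ]
      field_simp
      ring
    rw [Real.norm_eq_abs, Real.norm_eq_abs, abs_of_pos (hpos _), abs_of_pos (hpos _)]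
    push_cast
    rw [hkey]
    have h1 : 0 < r ^ (Ee (-(m:ℤ))) * R ^ (-(m:ℤ)) := hpos _
    nlinarith [mul_nonneg (pow_nonneg hr0.le (m+1)) (inv_pos.mpr hR).le]

end




section
variable {q x : ℂ} (hq0 : q ≠ 0) (hq : ‖q‖ < 1) (hx : x ≠ 0)

include hq0 hq in
lemma Ff_tendsto : Tendsto (Ff q) atTop (𝓝 (∏' i : ℕ, (1 - q ^ (i+1)))) := by
  have hsum : Summable (fun i : ℕ => q ^ (i+1)) := by
    have := summable_geometric_of_norm_lt_one hq
    exact (this.mul_left q).congr (fun i => by rw [pow_succ]; ring)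
  exact tendsto_prod_one_sub hsum

include hq0 hq in
lemma Pi_ne : (∏' i : ℕ, (1 - q ^ (i+1))) ≠ 0 := by
  obtain ⟨c, hc0, hc⟩ := Ff_lower hq0 hq
  have habs : Tendsto (fun m => ‖Ff q m‖) atTop
      (𝓝 (‖∏' i : ℕ, (1 - q ^ (i+1))‖)) :=
    (continuous_norm.tendsto _).comp (Ff_tendsto hq0 hq)
  have : c ≤ ‖∏' i : ℕ, (1 - q ^ (i+1))‖ :=
    ge_of_tendsto habs (Eventually.of_forall hc)
  intro h
  rw [h] at this
  simp at this
  linarith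

include hq0 hq in
lemma aa_tendsto (n : ℤ) :
    Tendsto (fun N => aa q x N n) atTop
      (𝓝 ((∏' i : ℕ, (1 - q ^ (i+1)))⁻¹ * ((-1:ℂ) ^ n * q ^ (Ee n) * x ^ n))) := by
  set Pi := ∏' i : ℕ, (1 - q ^ (i+1)) with hPi
  have hPine := Pi_ne hq0 hq
  have hF := Ff_tendsto hq0 hq
  have h1 : Tendsto (fun N : ℕ => Ff q (2*N)) atTop (𝓝 Pi) :=
    hF.comp (tendsto_atTop_mono (fun N => Nat.le_mul_of_pos_left N two_pos) tendsto_id)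
  have h2 : Tendsto (fun N : ℕ => Ff q ((n + N).toNat)) atTop (𝓝 Pi) :=
    hF.comp (tendsto_atTop_mono (fun N => by omega : ∀ N : ℕ, N - n.natAbs ≤ (n + N).toNat)
      (tendsto_sub_atTop_nat n.natAbs))
  have h3 : Tendsto (fun N : ℕ => Ff q (2*N - (n + N).toNat)) atTop (𝓝 Pi) :=
    hF.comp (tendsto_atTop_mono (fun N => by omega : ∀ N : ℕ, N - n.natAbs ≤ 2*N - (n + N).toNat)
      (tendsto_sub_atTop_nat n.natAbs))
  have hBc : Tendsto (fun N : ℕ => Bc q (2*N) ((n + N).toNat)) atTop (𝓝 (Pi / (Pi * Pi))) :=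
    h1.div (h2.mul h3) (mul_ne_zero hPine hPine)
  have hBc2 := hBc.mul_const ((-1:ℂ) ^ n * q ^ (Ee n) * x ^ n)
  have heq : Pi / (Pi * Pi) * ((-1:ℂ) ^ n * q ^ (Ee n) * x ^ n)
      = Pi⁻¹ * ((-1:ℂ) ^ n * q ^ (Ee n) * x ^ n) := by
    field_simp
  rw [heq] at hBc2
  apply hBc2.congr'
  filter_upwards [eventually_ge_atTop n.natAbs] with N hN
  rw [aa, if_pos hN]

end


end JTP

open JTP

theorem jacobi_triple_product (q x : ℂ) (hq0 : 0 < ‖q‖)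
    (hq : ‖q‖ < 1) (hx : x ≠ 0) :
    qPoch x q * qPoch (q / x) q * qPoch q q
      = ∑' n : ℤ, (-1 : ℂ) ^ n * q ^ (n * (n - 1) / 2) * x ^ n := by
  have hq0' : q ≠ 0 := by
    intro h; rw [h] at hq0; simp at hq0
  have hne : ∀ i : ℕ, 1 - q ^ (i+1) ≠ 0 := by
    intro i h
    have h1 : ‖q ^ (i+1)‖ = 1 := by
      have : q ^ (i+1) = 1 := by linear_combination -h
      rw [this, norm_one]
    rw [norm_pow] at h1
    have h2 : ‖q‖ ^ (i+1) < 1 := pow_lt_one₀ (norm_nonneg q) hq (by omega)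
    linarith
  set Pi := ∏' i : ℕ, (1 - q ^ (i+1)) with hPidef
  have hPine : Pi ≠ 0 := Pi_ne hq0' hq
  -- geometric summability
  have hgeo : Summable (fun i : ℕ => q ^ i) :=
    summable_geometric_of_norm_lt_one hq
  -- LHS tendsto
  have T1 : Tendsto (fun N => ∏ i ∈ range N, (1 - q ^ i * x)) atTop (𝓝 (qPoch x q)) :=
    tendsto_prod_one_sub (hgeo.mul_right x)
  have hsum2 : Summable (fun i : ℕ => q ^ (i+1) / x) :=
    (hgeo.mul_right (q / x)).congr (fun i => by rw [pow_succ]; ring)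
  have hq2 : qPoch (q / x) q = ∏' i : ℕ, (1 - q ^ (i+1) / x) :=
    tprod_congr (fun i => by rw [pow_succ]; ring_nf)
  have T2 : Tendsto (fun N => ∏ i ∈ range N, (1 - q ^ (i+1) / x)) atTop (𝓝 (qPoch (q / x) q)) := by
    rw [hq2]; exact tendsto_prod_one_sub hsum2
  have TL : Tendsto (fun N => (∏ i ∈ range N, (1 - q ^ i * x)) *
      ∏ i ∈ range N, (1 - q ^ (i+1) / x)) atTop (𝓝 (qPoch x q * qPoch (q / x) q)) := T1.mul T2
  -- RHS tendsto by dominated convergence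
  obtain ⟨K, hK⟩ := aa_bound (x := x) hq0' hq
  have hr0 : 0 < ‖q‖ := hq0
  have hR0 : 0 < ‖x‖ := norm_pos_iff.mpr hx
  have hdom : Summable (fun n : ℤ => K * (‖q‖ ^ (Ee n) * ‖x‖ ^ n)) :=
    (summable_dom hr0 hq hR0).mul_left K
  have TR : Tendsto (fun N => ∑' n : ℤ, aa q x N n) atTop
      (𝓝 (∑' n : ℤ, Pi⁻¹ * ((-1:ℂ) ^ n * q ^ (Ee n) * x ^ n))) := by
    apply tendsto_tsum_of_dominated_convergence hdom (fun n => aa_tendsto hq0' hq n)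
    filter_upwards with N n
    exact hK N n
  -- the two sequences are equal
  have hEq : (fun N => (∏ i ∈ range N, (1 - q ^ i * x)) * ∏ i ∈ range N, (1 - q ^ (i+1) / x))
      = fun N => ∑' n : ℤ, aa q x N n := by
    funext N
    rw [tsum_aa, finite_id hq0' hne hx N]
  rw [hEq] at TL
  have hmain : qPoch x q * qPoch (q / x) q
      = ∑' n : ℤ, Pi⁻¹ * ((-1:ℂ) ^ n * q ^ (Ee n) * x ^ n) :=
    tendsto_nhds_unique TL TR
  have hqq : qPoch q q = Pi := tprod_congr (fun i => by rw [pow_succ])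
  rw [hmain, hqq, tsum_mul_left]
  have : ∑' n : ℤ, ((-1:ℂ) ^ n * q ^ (Ee n) * x ^ n)
      = ∑' n : ℤ, (-1 : ℂ) ^ n * q ^ (n * (n - 1) / 2) * x ^ n := rfl
  rw [← this]
  field_simp
end

section
/- For generic nonzero x, z, q with |q|<1 (such that no denominator vanishes), the Appell function satisfies m(x,z;q) = m(x,qz;q), where m(x,z;q) := (1/j(z;q)) ∑_{r∈ℤ} (-1)^r q^{r(r-1)/2} z^r / (1 - q^{r-1} x z). -/
open Complex

/-- Appell function `m(x,z;q) = j(z;q)⁻¹ ∑' r ∈ ℤ, (-1)^r q^(r(r-1)/2) z^r / (1-q^(r-1)xz)`. -/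
noncomputable def appell (x z q : ℂ) : ℂ :=
  (jtheta z q)⁻¹
    * ∑' r : ℤ, (-1 : ℂ) ^ r * q ^ (r * (r - 1) / 2) * z ^ r / (1 - q ^ (r - 1) * x * z)

/-- A product with a zero factor has product zero. -/
lemma hasProd_zero_of_factor_zero {f : ℕ → ℂ} {N : ℕ} (h : f N = 0) : HasProd f 0 := by
  have : (fun s : Finset ℕ => ∏ i ∈ s, f i) =ᶠ[Filter.atTop] fun _ => (0 : ℂ) := by
    filter_upwards [Filter.eventually_ge_atTop ({N} : Finset ℕ)] with s hs
    exact Finset.prod_eq_zero (hs (Finset.mem_singleton_self N)) h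
  exact (tendsto_const_nhds.congr' this.symm : _)

lemma multipliable_aux {q : ℂ} (y : ℂ) (hq : ‖q‖ < 1) :
    Multipliable (fun n : ℕ => 1 - q ^ n * y) := by
  by_cases h : ∃ N, 1 - q ^ N * y = 0
  · obtain ⟨N, hN⟩ := h
    exact ⟨0, hasProd_zero_of_factor_zero hN⟩
  · push_neg at h
    have key : Summable (fun n : ℕ => Complex.log (1 - q ^ n * y)) := by
      have hq' : ‖q‖ < 1 := by exact hq
      have h0 : Filter.Tendsto (fun n : ℕ => ‖q ^ n * y‖) Filter.atTop (nhds 0) := by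
        simpa using ((tendsto_pow_atTop_nhds_zero_of_norm_lt_one hq').mul_const y).norm
      have hev : ∀ᶠ n in Filter.atTop, ‖q ^ n * y‖ ≤ 1/2 :=
        (h0.eventually_lt_const (by norm_num : (0:ℝ) < 1/2)).mono fun n hn => hn.le
      apply Summable.of_norm_bounded_eventually_nat (g := fun n => 3/2 * (‖q‖ ^ n * ‖y‖))
      · exact (Summable.mul_right _ (summable_geometric_of_lt_one (norm_nonneg q) hq')).mul_left _
      · filter_upwards [hev] with n hn
        have h1 : ‖-(q ^ n * y)‖ ≤ 1/2 := by rwa [norm_neg]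
        have := Complex.norm_log_one_add_half_le_self h1
        rw [show (1 : ℂ) + -(q ^ n * y) = 1 - q ^ n * y by ring] at this
        simpa [norm_mul, norm_pow] using this
    exact Complex.multipliable_of_summable_log key

lemma qPoch_shift {q : ℂ} (y : ℂ) (hq : ‖q‖ < 1) :
    qPoch y q = (1 - y) * qPoch (q * y) q := by
  have hfun : (fun n : ℕ => 1 - q ^ (n + 1) * y) = fun n : ℕ => 1 - q ^ n * (q * y) := by
    funext n; rw [pow_succ, mul_assoc]
  have hm : Multipliable (fun n : ℕ => 1 - q ^ (n + 1) * y) := by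
    rw [hfun]; exact multipliable_aux (q * y) hq
  have := tprod_eq_zero_mul' (f := fun n : ℕ => 1 - q ^ n * y) (by
    simpa [pow_succ, mul_assoc] using hm)
  simp only [pow_zero, one_mul] at this
  rw [qPoch, this, qPoch]
  congr 1
  rw [← hfun]

lemma qPoch_one (q : ℂ) : qPoch 1 q = 0 :=
  (hasProd_zero_of_factor_zero (f := fun n : ℕ => 1 - q ^ n * 1) (N := 0)
    (by simp)).tprod_eq

lemma jtheta_shift {q z : ℂ} (hq : ‖q‖ < 1) (hq0 : q ≠ 0) (hz : z ≠ 0)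
    (hz1 : z ≠ 1) : jtheta (q * z) q = -z⁻¹ * jtheta z q := by
  have h1 : (1 : ℂ) - z ≠ 0 := fun h => hz1 (by linear_combination -h)
  have hdiv : q / (q * z) = z⁻¹ := by field_simp
  have e1 : qPoch (q * z) q = (1 - z)⁻¹ * qPoch z q := by
    rw [qPoch_shift z hq]; field_simp
  have e2 : qPoch z⁻¹ q = (1 - z⁻¹) * qPoch (q / z) q := by
    rw [qPoch_shift z⁻¹ hq, ← div_eq_mul_inv]
  rw [jtheta, hdiv, e1, e2, jtheta]
  have : (1 - z⁻¹) = -z⁻¹ * (1 - z) := by field_simp; ring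
  rw [this]
  field_simp

lemma exp_arith (r : ℤ) : (r - 1) * (r - 1 - 1) / 2 + (r - 1) = r * (r - 1) / 2 := by
  obtain ⟨k, hk⟩ := Int.even_mul_succ_self (r - 2)
  have hk' : (r - 1) * (r - 1 - 1) = 2 * k := by linear_combination hk
  have hb : r * (r - 1) = (r - 1) * (r - 1 - 1) + 2 * (r - 1) := by ring
  omega

lemma term_shift {q x z : ℂ} (hq0 : q ≠ 0) (hz : z ≠ 0) (r : ℤ) :
    (-1 : ℂ) ^ (r - 1) * q ^ ((r - 1) * (r - 1 - 1) / 2) * (q * z) ^ (r - 1)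
        / (1 - q ^ (r - 1 - 1) * x * (q * z))
      = -z⁻¹ * ((-1 : ℂ) ^ r * q ^ (r * (r - 1) / 2) * z ^ r / (1 - q ^ (r - 1) * x * z)) := by
  have hden_eq : 1 - q ^ (r - 1 - 1) * x * (q * z) = 1 - q ^ (r - 1) * x * z := by
    have hqq : q ^ (r - 1 - 1) * q = q ^ (r - 1) := by
      rw [← zpow_add_one₀ hq0]; congr 1; ring
    calc 1 - q ^ (r - 1 - 1) * x * (q * z) = 1 - q ^ (r - 1 - 1) * q * x * z := by ring
    _ = 1 - q ^ (r - 1) * x * z := by rw [hqq]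
  have hm1 : (-1 : ℂ) ^ (r - 1) = -(-1 : ℂ) ^ r := by
    rw [zpow_sub₀ (by norm_num : (-1 : ℂ) ≠ 0), zpow_one, div_neg, div_one]
  have hzr : z ^ (r - 1) = z ^ r * z⁻¹ := by
    rw [zpow_sub₀ hz, zpow_one, div_eq_mul_inv]
  have hqe : q ^ ((r - 1) * (r - 1 - 1) / 2) * q ^ (r - 1) = q ^ (r * (r - 1) / 2) := by
    rw [← zpow_add₀ hq0, exp_arith]
  rw [hden_eq, hm1, mul_zpow, hzr, mul_div_assoc']
  congr 1
  linear_combination (-(-1 : ℂ) ^ r * z ^ r * z⁻¹) * hqe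

lemma sum_shift {q x z : ℂ} (hq0 : q ≠ 0) (hz : z ≠ 0) :
    (∑' r : ℤ, (-1 : ℂ) ^ r * q ^ (r * (r - 1) / 2) * (q * z) ^ r
        / (1 - q ^ (r - 1) * x * (q * z)))
      = -z⁻¹ * ∑' r : ℤ, (-1 : ℂ) ^ r * q ^ (r * (r - 1) / 2) * z ^ r
        / (1 - q ^ (r - 1) * x * z) := by
  set g : ℤ → ℂ := fun r => (-1 : ℂ) ^ r * q ^ (r * (r - 1) / 2) * (q * z) ^ r
    / (1 - q ^ (r - 1) * x * (q * z)) with hg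
  calc (∑' r : ℤ, g r) = ∑' r : ℤ, g (r - 1) := ((Equiv.subRight (1 : ℤ)).tsum_eq g).symm
  _ = ∑' r : ℤ, -z⁻¹ * ((-1 : ℂ) ^ r * q ^ (r * (r - 1) / 2) * z ^ r
        / (1 - q ^ (r - 1) * x * z)) := by
      refine tsum_congr fun r => ?_
      rw [hg]
      exact term_shift hq0 hz r
  _ = -z⁻¹ * ∑' r : ℤ, (-1 : ℂ) ^ r * q ^ (r * (r - 1) / 2) * z ^ r
        / (1 - q ^ (r - 1) * x * z) := tsum_mul_left

theorem appell_z_shift (q x z : ℂ) (hq : ‖q‖ < 1)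
    (hq0 : q ≠ 0) (hx : x ≠ 0) (hz : z ≠ 0)
    (hden : ∀ r : ℤ, 1 - q ^ (r - 1) * x * z ≠ 0)
    (hden' : ∀ r : ℤ, 1 - q ^ (r - 1) * x * (q * z) ≠ 0)
    (hj : jtheta z q ≠ 0) (hj' : jtheta (q * z) q ≠ 0) :
    appell x z q = appell x (q * z) q := by
  have hz1 : z ≠ 1 := by
    intro h
    apply hj
    rw [h, jtheta, qPoch_one, zero_mul, zero_mul]
  rw [appell, appell, sum_shift hq0 hz, jtheta_shift hq hq0 hz hz1]
  have hw : (-z⁻¹ : ℂ) ≠ 0 := by simpa using hz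
  rw [mul_inv]
  rw [mul_assoc, mul_comm ((-z⁻¹ : ℂ))⁻¹, mul_assoc]
  congr 1
  rw [mul_comm, ← mul_assoc, inv_mul_cancel₀ hw, one_mul]
end

section
/- For generic nonzero x, z, q with |q|<1, the Appell function satisfies m(x,z;q) = x^{-1} m(x^{-1}, z^{-1}; q). -/
open Complex

open Filter in
lemma summable_log_qPoch (x q : ℂ) (hq : ‖q‖ < 1) :
    Summable (fun i : ℕ => Complex.log (1 - q ^ i * x)) := by
  have hgeo : Summable (fun i : ℕ => (3/2) * (‖q‖ ^ i * ‖x‖)) := by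
    exact (((summable_geometric_of_lt_one (norm_nonneg q) hq).mul_right
      (‖x‖)).mul_left (3/2))
  apply hgeo.of_norm_bounded_eventually_nat
  have htend : Tendsto (fun n : ℕ => ‖q ^ n * x‖) atTop (nhds 0) := by
    have h1 : Tendsto (fun n : ℕ => q ^ n * x) atTop (nhds 0) := by
      simpa using (tendsto_pow_atTop_nhds_zero_of_norm_lt_one
        (by simpa using hq)).mul_const x
    simpa using h1.norm
  have hev : ∀ᶠ n : ℕ in atTop, ‖q ^ n * x‖ ≤ 1/2 := by
    have := htend.eventually (eventually_le_nhds (by norm_num : (0:ℝ) < 1/2))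
    exact this
  filter_upwards [hev] with n hn
  have := Complex.norm_log_one_add_half_le_self (z := -(q ^ n * x)) (by simpa using hn)
  rw [show (1 : ℂ) + -(q ^ n * x) = 1 - q ^ n * x by ring] at this
  calc ‖Complex.log (1 - q ^ n * x)‖ ≤ 3/2 * ‖-(q ^ n * x)‖ := this
    _ = 3/2 * (‖q‖ ^ n * ‖x‖) := by
        simp [map_mul, map_pow]

open Filter in
lemma multipliable_qPoch (x q : ℂ) (hq : ‖q‖ < 1) :
    Multipliable (fun i : ℕ => 1 - q ^ i * x) := by
  by_cases h : ∀ i : ℕ, 1 - q ^ i * x ≠ 0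
  · exact Complex.multipliable_of_summable_log (summable_log_qPoch x q hq)
  · push_neg at h
    obtain ⟨i₀, hi₀⟩ := h
    refine ⟨0, ?_⟩
    rw [HasProd]
    apply Tendsto.congr' _ tendsto_const_nhds
    filter_upwards [Filter.eventually_ge_atTop {i₀}] with s hs
    exact (Finset.prod_eq_zero (hs (Finset.mem_singleton_self i₀)) hi₀).symm

set_option maxHeartbeats 1000000 in
lemma qPoch_peel (x q : ℂ) (hq : ‖q‖ < 1) :
    qPoch x q = (1 - x) * qPoch (q * x) q := by
  have hm : Multipliable (fun n : ℕ => (1 : ℂ) - q ^ (n + 1) * x) :=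
    (multipliable_qPoch (q * x) q hq).congr (fun n => by ring)
  have h := tprod_eq_zero_mul' (f := fun n : ℕ => 1 - q ^ n * x) hm
  simp only [pow_zero, one_mul] at h
  rw [qPoch, h, qPoch]
  congr 1
  exact tprod_congr fun i => by ring

lemma jtheta_inv (z q : ℂ) (hq : ‖q‖ < 1) (hz : z ≠ 0) :
    jtheta z⁻¹ q = -z⁻¹ * jtheta z q := by
  unfold jtheta
  rw [qPoch_peel z⁻¹ q hq, qPoch_peel z q hq]
  have h1 : q / z⁻¹ = q * z := by field_simp
  have h2 : q / z = q * z⁻¹ := by rw [div_eq_mul_inv]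
  rw [h1, h2]
  have h3 : (1 - z⁻¹) = -z⁻¹ * (1 - z) := by field_simp; ring
  rw [h3]; ring

lemma term_flip (q x z : ℂ) (hq0 : q ≠ 0) (hx : x ≠ 0) (hz : z ≠ 0) (r : ℤ)
    (h1 : 1 - q ^ (r - 1) * x⁻¹ * z⁻¹ ≠ 0) (h2 : 1 - q ^ (2 - r - 1) * x * z ≠ 0) :
    (-1:ℂ) ^ r * q ^ (r * (r - 1) / 2) * (z⁻¹) ^ r / (1 - q ^ (r - 1) * x⁻¹ * z⁻¹)
      = (-(x * z⁻¹)) * ((-1:ℂ) ^ (2 - r) * q ^ ((2 - r) * (2 - r - 1) / 2) * z ^ (2 - r)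
        / (1 - q ^ (2 - r - 1) * x * z)) := by
  have ha : q ^ (r - 1) ≠ 0 := zpow_ne_zero _ hq0
  have hb : z ^ r ≠ 0 := zpow_ne_zero _ hz
  have hneg : ((-1:ℂ)) ^ (2 - r) = (-1) ^ r := by
    have hsq : ((-1:ℂ)) ^ r * ((-1:ℂ)) ^ r = 1 := by
      rw [← zpow_add₀ (by norm_num : (-1:ℂ) ≠ 0), show r + r = 2 * r by ring, zpow_mul]
      norm_num
    rw [zpow_sub₀ (by norm_num : (-1:ℂ) ≠ 0), show ((-1:ℂ)) ^ (2:ℤ) = 1 by norm_num,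
      one_div, inv_eq_of_mul_eq_one_right hsq]
  have hexp : (2 - r) * (2 - r - 1) / 2 = r * (r - 1) / 2 + -(r - 1) := by
    rw [show (2 - r) * (2 - r - 1) = r * (r - 1) + -(r - 1) * 2 by ring,
      Int.add_mul_ediv_right _ _ two_ne_zero]
  rw [hneg, hexp, zpow_add₀ hq0, zpow_neg] at *
  rw [show (2:ℤ) - r - 1 = -(r - 1) by ring, zpow_neg] at *
  rw [show (2:ℤ) - r = 2 + -r by ring, zpow_add₀ hz, zpow_neg,
    show z ^ (2:ℤ) = z * z by rw [show (2:ℤ) = 1 + 1 by norm_num, zpow_add₀ hz, zpow_one]]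
  rw [inv_zpow, ← mul_div_assoc, div_eq_div_iff h1 h2]
  field_simp
  ring

theorem appell_flip (q x z : ℂ) (hq : ‖q‖ < 1)
    (hq0 : q ≠ 0) (hx : x ≠ 0) (hz : z ≠ 0)
    (hden : ∀ r : ℤ, 1 - q ^ (r - 1) * x * z ≠ 0)
    (hden' : ∀ r : ℤ, 1 - q ^ (r - 1) * x⁻¹ * z⁻¹ ≠ 0)
    (hj : jtheta z q ≠ 0) (hj' : jtheta z⁻¹ q ≠ 0) :
    appell x z q = x⁻¹ * appell x⁻¹ z⁻¹ q := by
  have hsum : (∑' r : ℤ, (-1:ℂ) ^ r * q ^ (r * (r - 1) / 2) * (z⁻¹) ^ r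
        / (1 - q ^ (r - 1) * x⁻¹ * z⁻¹))
      = (-(x * z⁻¹)) * ∑' r : ℤ, (-1:ℂ) ^ r * q ^ (r * (r - 1) / 2) * z ^ r
        / (1 - q ^ (r - 1) * x * z) := by
    calc (∑' r : ℤ, (-1:ℂ) ^ r * q ^ (r * (r - 1) / 2) * (z⁻¹) ^ r
            / (1 - q ^ (r - 1) * x⁻¹ * z⁻¹))
        = ∑' r : ℤ, (-(x * z⁻¹)) * ((-1:ℂ) ^ (2 - r) * q ^ ((2 - r) * (2 - r - 1) / 2)
            * z ^ (2 - r) / (1 - q ^ (2 - r - 1) * x * z)) :=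
          tsum_congr fun r => term_flip q x z hq0 hx hz r (hden' r) (hden (2 - r))
      _ = ∑' r : ℤ, (-(x * z⁻¹)) * ((-1:ℂ) ^ r * q ^ (r * (r - 1) / 2)
            * z ^ r / (1 - q ^ (r - 1) * x * z)) :=
          Equiv.tsum_eq (Equiv.subLeft (2:ℤ)) (fun r => (-(x * z⁻¹)) *
            ((-1:ℂ) ^ r * q ^ (r * (r - 1) / 2) * z ^ r / (1 - q ^ (r - 1) * x * z)))
      _ = (-(x * z⁻¹)) * ∑' r : ℤ, (-1:ℂ) ^ r * q ^ (r * (r - 1) / 2) * z ^ r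
            / (1 - q ^ (r - 1) * x * z) := tsum_mul_left
  rw [appell, appell, jtheta_inv z q hq hz, hsum]
  have hJ := hj
  field_simp
  ring
  exact tsum_congr fun r => by ring
end
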